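/- Let X be a finite-dimensional real inner product space with inner product ⟨·,·⟩ and norm |·|. Let φ : [0,∞) → ℝ be continuous with φ(s) > 0 for all s ≥ 0, suppose the map t ↦ t·φ(t²/2) is strictly increasing on [0,∞), and let Φ(s) = ∫₀^s φ(τ) dτ. Then for all ξ, ζ ∈ X: Φ(|ξ|²/2) − Φ(|ζ|²/2) − φ(|ζ|²/2)·⟨ζ, ξ − ζ⟩ ≥ φ(|ζ|²/2)·(|ξ|·|ζ| − ⟨ξ,ζ⟩) ≥ 0. -/

import Mathlib

open intervalIntegral
open scoped RealInnerProductSpace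

private lemma key_scalar (φ Φ : ℝ → ℝ) (hφc : ContinuousOn φ (Set.Ici 0))
    (hmono : StrictMonoOn (fun t : ℝ => t * φ (t ^ 2 / 2)) (Set.Ici 0))
    (hΦ : ∀ s : ℝ, Φ s = ∫ τ in (0:ℝ)..s, φ τ)
    {a b : ℝ} (ha : 0 ≤ a) (hb : 0 ≤ b) :
    φ (b ^ 2 / 2) * (b * (a - b)) ≤ Φ (a ^ 2 / 2) - Φ (b ^ 2 / 2) := by
  set g : ℝ → ℝ := fun s => ∫ τ in (0:ℝ)..s, φ τ with hg
  set F : ℝ → ℝ := fun t => g (t ^ 2 / 2) with hF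
  -- derivative of F at t > 0
  have hderiv : ∀ t : ℝ, 0 < t → HasDerivAt F (t * φ (t ^ 2 / 2)) t := by
    intro t ht
    have hs : (0:ℝ) < t ^ 2 / 2 := by positivity
    have hint : IntervalIntegrable φ MeasureTheory.volume 0 (t ^ 2 / 2) := by
      apply ContinuousOn.intervalIntegrable
      apply hφc.mono
      rw [Set.uIcc_of_le hs.le]
      exact fun x hx => hx.1
    have hmeas : StronglyMeasurableAtFilter φ (nhds (t ^ 2 / 2)) MeasureTheory.volume :=
      ⟨Set.Ioi 0, Ioi_mem_nhds hs,
        (hφc.mono Set.Ioi_subset_Ici_self).aestronglyMeasurable measurableSet_Ioi⟩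
    have hcont : ContinuousAt φ (t ^ 2 / 2) :=
      hφc.continuousAt (Ici_mem_nhds hs)
    have hgd : HasDerivAt g (φ (t ^ 2 / 2)) (t ^ 2 / 2) :=
      intervalIntegral.integral_hasDerivAt_right hint hmeas hcont
    have hq : HasDerivAt (fun t : ℝ => t ^ 2 / 2) t t := by
      have := (hasDerivAt_pow 2 t).div_const 2
      simpa using this
    have := hgd.comp t hq
    rw [mul_comm]; exact this
  -- continuity of F on Icc within Ici 0
  have hcontF : ∀ M : ℝ, 0 ≤ M → ContinuousOn F (Set.Icc 0 M) := by
    intro M hM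
    have hgc : ContinuousOn g (Set.uIcc (0:ℝ) (M ^ 2 / 2)) := by
      apply intervalIntegral.continuousOn_primitive_interval
      apply (hφc.mono ?_).integrableOn_compact isCompact_uIcc
      rw [Set.uIcc_of_le (by positivity)]
      exact fun x hx => hx.1
    have hqc : ContinuousOn (fun t : ℝ => t ^ 2 / 2) (Set.Icc 0 M) :=
      (continuous_pow 2).continuousOn.div_const 2
    refine hgc.comp hqc ?_
    intro x hx
    rw [Set.uIcc_of_le (by positivity)]
    constructor
    · positivity
    · have h1 : x ^ 2 ≤ M ^ 2 := pow_le_pow_left₀ hx.1 hx.2 2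
      linarith
  have hmono' : ∀ {x y : ℝ}, 0 ≤ x → x ≤ y → x * φ (x ^ 2 / 2) ≤ y * φ (y ^ 2 / 2) := by
    intro x y hx hxy
    rcases eq_or_lt_of_le hxy with rfl | h
    · exact le_refl _
    · simpa using (hmono (Set.mem_Ici.mpr hx) (Set.mem_Ici.mpr (hx.trans hxy)) h).le
  have hΦF : ∀ t : ℝ, Φ (t ^ 2 / 2) = F t := fun t => hΦ _
  rcases lt_trichotomy a b with hab | rfl | hab
  · -- a < b : MVT on [a, b]
    obtain ⟨c, hc, hceq⟩ :=
      exists_hasDerivAt_eq_slope F (fun t => t * φ (t ^ 2 / 2)) hab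
        ((hcontF b hb).mono (Set.Icc_subset_Icc_left ha))
        (fun t ht => hderiv t (ha.trans_lt ht.1))
    have hc0 : 0 ≤ c := ha.trans hc.1.le
    have hle : c * φ (c ^ 2 / 2) ≤ b * φ (b ^ 2 / 2) := hmono' hc0 hc.2.le
    have hceq' : c * φ (c ^ 2 / 2) = (F b - F a) / (b - a) := hceq
    rw [eq_div_iff (sub_ne_zero.mpr hab.ne')] at hceq'
    rw [hΦF, hΦF]
    nlinarith [hc.2, sub_pos.mpr hab, hceq']
  · simp
  · -- b < a
    obtain ⟨c, hc, hceq⟩ :=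
      exists_hasDerivAt_eq_slope F (fun t => t * φ (t ^ 2 / 2)) hab
        ((hcontF a ha).mono (Set.Icc_subset_Icc_left hb))
        (fun t ht => hderiv t (hb.trans_lt ht.1))
    have hle : b * φ (b ^ 2 / 2) ≤ c * φ (c ^ 2 / 2) := hmono' hb hc.1.le
    have hceq' : c * φ (c ^ 2 / 2) = (F a - F b) / (a - b) := hceq
    rw [eq_div_iff (sub_ne_zero.mpr hab.ne')] at hceq'
    rw [hΦF, hΦF]
    nlinarith [sub_pos.mpr hab, hceq']

theorem pointwise_convexity_estimate
    {X : Type*} [NormedAddCommGroup X] [InnerProductSpace ℝ X]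
    [FiniteDimensional ℝ X]
    (φ : ℝ → ℝ) (hφc : ContinuousOn φ (Set.Ici 0))
    (hφpos : ∀ s ∈ Set.Ici (0:ℝ), 0 < φ s)
    (hmono : StrictMonoOn (fun t : ℝ => t * φ (t ^ 2 / 2)) (Set.Ici 0))
    (Φ : ℝ → ℝ) (hΦ : ∀ s : ℝ, Φ s = ∫ τ in (0:ℝ)..s, φ τ) :
    ∀ ξ ζ : X,
      (φ (‖ζ‖ ^ 2 / 2) * (‖ξ‖ * ‖ζ‖ - ⟪ξ, ζ⟫) ≤
        Φ (‖ξ‖ ^ 2 / 2) - Φ (‖ζ‖ ^ 2 / 2) - φ (‖ζ‖ ^ 2 / 2) * ⟪ζ, ξ - ζ⟫) ∧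
      0 ≤ φ (‖ζ‖ ^ 2 / 2) * (‖ξ‖ * ‖ζ‖ - ⟪ξ, ζ⟫) := by
  intro ξ ζ
  have hkey := key_scalar φ Φ hφc hmono hΦ (norm_nonneg ξ) (norm_nonneg ζ)
  have hCS : ⟪ξ, ζ⟫ ≤ ‖ξ‖ * ‖ζ‖ := real_inner_le_norm ξ ζ
  have hpos : 0 < φ (‖ζ‖ ^ 2 / 2) := hφpos _ (Set.mem_Ici.mpr (by positivity))
  have hinner : ⟪ζ, ξ - ζ⟫ = ⟪ξ, ζ⟫ - ‖ζ‖ ^ 2 := by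
    rw [inner_sub_right, real_inner_comm, real_inner_self_eq_norm_sq]
  constructor
  · rw [hinner]; nlinarith
  · nlinarith
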